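/- For every integer p ≥ 2 and prime q not dividing p, the quality of the triple (a, b, c) = (p^(q^(n-1)(q-1)) − 1, 1, p^(q^(n-1)(q-1))), namely log c / log rad(abc), is at least log c / (log p + log a − (n−1) log q); consequently for fixed p, q the quality can be made arbitrarily close to any value below the limit as n grows, and in particular exceeds 1 for all sufficiently large n. -/

import Mathlib

/-- The radical of a positive integer: the product of its distinct prime factors. -/
def rad (n : ℕ) : ℕ := ∏ p ∈ n.primeFactors, p

lemma rad_dvd_self (n : ℕ) : rad n ∣ n := Nat.prod_primeFactors_dvd n

lemma rad_mul_dvd (a b : ℕ) (ha : a ≠ 0) (hb : b ≠ 0) : rad (a*b) ∣ rad a * rad b := by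
  unfold rad
  rw [Nat.primeFactors_mul ha hb, ← Finset.union_sdiff_self_eq_union,
    Finset.prod_union Finset.disjoint_sdiff]
  exact mul_dvd_mul dvd_rfl (Finset.prod_dvd_prod_of_subset _ _ _ Finset.sdiff_subset)

lemma two_le_rad (n : ℕ) (hn : 2 ≤ n) : 2 ≤ rad n := by
  obtain ⟨pp, hpp, hdvd⟩ := Nat.exists_prime_and_dvd (by omega : n ≠ 1)
  have hmem : pp ∈ n.primeFactors := Nat.mem_primeFactors.mpr ⟨hpp, hdvd, by omega⟩
  calc 2 ≤ pp := hpp.two_le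
    _ ≤ rad n := Nat.le_of_dvd (Finset.prod_pos fun r hr => (Nat.prime_of_mem_primeFactors hr).pos)
        (Finset.dvd_prod_of_mem _ hmem)

lemma rad_pow (p k : ℕ) (hk : k ≠ 0) : rad (p ^ k) = rad p := by
  unfold rad; rw [Nat.primeFactors_pow _ hk]

lemma rad_prime (q : ℕ) (hq : q.Prime) : rad q = q := by
  unfold rad; rw [Nat.Prime.primeFactors hq, Finset.prod_singleton]

lemma key (p q : ℕ) (hp : 2 ≤ p) (hq : q.Prime) (hpq : ¬ q ∣ p) (n : ℕ) (hn : 1 ≤ n) :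
    ∃ m : ℕ, 1 ≤ m ∧ p ^ (q ^ (n-1) * (q-1)) - 1 = q ^ n * m ∧
      rad ((p ^ (q ^ (n-1) * (q-1)) - 1) * (p ^ (q ^ (n-1) * (q-1)))) ≤ q * m * p := by
  have hq2 := hq.two_le
  set t := q ^ (n-1) * (q-1) with ht
  have ht1 : 1 ≤ t := Nat.mul_pos (pow_pos (by omega) _) (by omega)
  have hpt : 2 ≤ p ^ t := le_trans hp (Nat.le_self_pow (by omega) p)
  have hcop : Nat.Coprime p (q^n) := ((hq.coprime_iff_not_dvd.mpr hpq).symm).pow_right n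
  have heuler := Nat.ModEq.pow_totient hcop
  rw [Nat.totient_prime_pow hq (by omega)] at heuler
  have hdvd : q^n ∣ p^t - 1 := (Nat.modEq_iff_dvd' (by omega)).mp heuler.symm
  obtain ⟨m, hm⟩ := hdvd
  have hqn : 0 < q ^ n := pow_pos (by omega) n
  have hm1 : 1 ≤ m := by
    rcases Nat.eq_zero_or_pos m with h | h
    · simp [h] at hm; omega
    · exact h
  refine ⟨m, hm1, hm, ?_⟩
  have hane : p^t - 1 ≠ 0 := by omega
  have hcne : p^t ≠ 0 := by omega
  have h1 : rad ((p^t - 1) * p^t) ∣ rad (p^t - 1) * rad (p^t) := rad_mul_dvd _ _ hane hcne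
  have h2 : rad (p^t - 1) ∣ q * m := by
    have h3 : rad (p^t - 1) ∣ rad (q^n) * rad m := hm ▸ rad_mul_dvd (q^n) m (by omega) (by omega)
    rw [rad_pow _ _ (by omega), rad_prime q hq] at h3
    exact h3.trans (mul_dvd_mul_left q (rad_dvd_self m))
  have h4 : rad (p^t) ∣ p := by
    rw [rad_pow _ _ (by omega)]; exact rad_dvd_self p
  exact Nat.le_of_dvd (by positivity) (h1.trans (mul_dvd_mul h2 h4))

theorem stmt_19 (p q : ℕ) (hp : 2 ≤ p) (hq : q.Prime) (hpq : ¬ q ∣ p) :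
    (∀ n : ℕ, 1 ≤ n →
      ∀ a c : ℕ, a = p ^ (q ^ (n - 1) * (q - 1)) - 1 → c = a + 1 →
        Real.log c / Real.log (rad (a * 1 * c))
          ≥ Real.log c / (Real.log p + Real.log a - (n - 1 : ℝ) * Real.log q)) ∧
    (∃ N : ℕ, ∀ n : ℕ, N ≤ n →
      ∀ a c : ℕ, a = p ^ (q ^ (n - 1) * (q - 1)) - 1 → c = a + 1 →
        1 < Real.log c / Real.log (rad (a * 1 * c))) := by
  have hq2 := hq.two_le
  constructor
  · intro n hn a c ha hc
    obtain ⟨m, hm1, hm2, hm3⟩ := key p q hp hq hpq n hn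
    have ht1 : 1 ≤ q ^ (n-1) * (q-1) := Nat.mul_pos (pow_pos (by omega) _) (by omega)
    have hpt : 2 ≤ p ^ (q ^ (n-1) * (q-1)) := le_trans hp (Nat.le_self_pow (by omega) p)
    have hc' : c = p ^ (q ^ (n-1) * (q-1)) := by omega
    have ha1 : 1 ≤ a := by omega
    rw [mul_one]
    set R := rad (a * c) with hR
    have hR2 : 2 ≤ R := two_le_rad _ (by nlinarith)
    have hRle : R ≤ q * m * p := by rw [hR, ha, hc']; exact hm3
    have hlogR : 0 < Real.log R := Real.log_pos (by exact_mod_cast hR2)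
    have hlogc : 0 ≤ Real.log c := Real.log_nonneg (by
      have : 2 ≤ c := by omega
      exact_mod_cast this.trans' (by norm_num))
    have hloga : Real.log a = n * Real.log q + Real.log m := by
      have : (a : ℝ) = (q:ℝ)^n * m := by rw [ha, hm2]; push_cast; ring
      rw [this, Real.log_mul (by positivity) (by exact_mod_cast Nat.cast_ne_zero.mpr (by omega)),
        Real.log_pow]
    have hRboundlog : Real.log R ≤ Real.log q + Real.log m + Real.log p := by
      calc Real.log R ≤ Real.log ((q:ℝ) * m * p) := by
            apply Real.log_le_log (by exact_mod_cast (by omega : (0:ℕ) < R))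
            exact_mod_cast hRle
        _ = Real.log q + Real.log m + Real.log p := by
            rw [Real.log_mul (by positivity) (by positivity),
              Real.log_mul (by positivity) (by exact_mod_cast Nat.cast_ne_zero.mpr (by omega))]
    have hD : Real.log p + Real.log a - ((n:ℝ) - 1) * Real.log q
        = Real.log p + Real.log q + Real.log m := by
      rw [hloga]; ring
    rw [ge_iff_le, hD]
    apply div_le_div_of_nonneg_left hlogc hlogR (by linarith)
  · refine ⟨p + 1, fun n hn a c ha hc => ?_⟩
    obtain ⟨m, hm1, hm2, hm3⟩ := key p q hp hq hpq n (by omega)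
    have ht1 : 1 ≤ q ^ (n-1) * (q-1) := Nat.mul_pos (pow_pos (by omega) _) (by omega)
    have hpt : 2 ≤ p ^ (q ^ (n-1) * (q-1)) := le_trans hp (Nat.le_self_pow (by omega) p)
    have hc' : c = p ^ (q ^ (n-1) * (q-1)) := by omega
    have ha1 : 1 ≤ a := by omega
    rw [mul_one]
    set R := rad (a * c) with hR
    have hR2 : 2 ≤ R := two_le_rad _ (by nlinarith)
    have hRle : R ≤ q * m * p := by rw [hR, ha, hc']; exact hm3
    have hpq' : p < q ^ (n - 1) :=
      lt_of_lt_of_le (Nat.lt_pow_self hq.one_lt : p < q ^ p) (Nat.pow_le_pow_right (by omega) (by omega))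
    have hqq : q ^ n = q * q ^ (n-1) := by
      conv_lhs => rw [show n = 1 + (n-1) by omega]
      rw [pow_add, pow_one]
    have hRlta : R < a := by
      calc R ≤ q * m * p := hRle
        _ < q * m * q ^ (n-1) := by
            exact mul_lt_mul_of_pos_left hpq' (by positivity)
        _ = q ^ n * m := by rw [hqq]; ring
        _ = a := (ha.trans hm2).symm
    have hlogR : 0 < Real.log R := Real.log_pos (by exact_mod_cast hR2)
    rw [lt_div_iff₀ hlogR, one_mul]
    apply Real.log_lt_log (by exact_mod_cast (by omega : (0:ℕ) < R))
    exact_mod_cast (by omega : R < c)
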